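/- Let F = ℚ(λ,μ,P0,P1,R0,R1) be the field of rational functions in six indeterminates, set R2 := (P0+λR0R1−λP0R1)⁻¹, and let M(x) := (1/R0)·[[−1, 1, 0], [−x/λ−1, 1, 1/λ], [0, (λP0R1R2+1)x, −P0R2]]. Then the matrix M(0) annihilates the vector (1,1,0)ᵀ, i.e. M(0)·(1,1,0)ᵀ = 0, and 0 is an eigenvalue of M(0) of algebraic multiplicity two: the characteristic polynomial satisfies det(t·I₃ − M(0)) = t²·(t + P0R2/R0). -/

import Mathlib

noncomputable section

/-- The field `ℚ(λ,μ,P0,P1,R0,R1)` of rational functions in six indeterminates. -/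
abbrev F6 : Type := FractionRing (MvPolynomial (Fin 6) ℚ)

/-- The six generators `λ, μ, P0, P1, R0, R1` of `F6`. -/
def gen6 (i : Fin 6) : F6 :=
  algebraMap (MvPolynomial (Fin 6) ℚ) F6 (MvPolynomial.X i)

variable {K : Type*} [Field K]

/-- The matrix `M(x)` of the discrete Lax pair, where `R2 = (P0+λR0R1−λP0R1)⁻¹`. -/
def laxM (lam P0 R0 R1 x : K) : Matrix (Fin 3) (Fin 3) K :=
  let R2 := (P0 + lam*R0*R1 - lam*P0*R1)⁻¹
  (1/R0) • !![-1, 1, 0;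
              -x/lam - 1, 1, 1/lam;
              0, (lam*P0*R1*R2 + 1)*x, -(P0*R2)]

/-- `M(0)` annihilates `(1,1,0)ᵀ`, and `0` is an eigenvalue of `M(0)` of algebraic
multiplicity two: `det(t·I₃ − M(0)) = t²·(t + P0R2/R0)`. -/
theorem somos6_M0_kernel_and_charpoly :
    let lam : F6 := gen6 0
    let P0 : F6 := gen6 2
    let R0 : F6 := gen6 4
    let R1 : F6 := gen6 5
    let R2 : F6 := (P0 + lam*R0*R1 - lam*P0*R1)⁻¹
    let M0 : Matrix (Fin 3) (Fin 3) F6 := laxM lam P0 R0 R1 0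
    M0.mulVec ![1, 1, 0] = 0
    ∧ M0.charpoly = Polynomial.X^2 * (Polynomial.X + Polynomial.C (P0*R2/R0)) := by
  intro lam P0 R0 R1 R2 M0
  have hM : M0 = !![-(1/R0), 1/R0, 0;
                    -(1/R0), 1/R0, 1/R0*(1/lam);
                    0, 0, -(1/R0*(P0*R2))] := by
    show laxM lam P0 R0 R1 0 = _
    simp only [laxM, Matrix.smul_of, Matrix.smul_cons, Matrix.smul_empty]
    norm_num [Matrix.smul_cons, smul_eq_mul]
    exact Or.inl (Or.inl rfl)
  constructor
  · rw [hM]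
    funext i
    fin_cases i <;>
      simp [Matrix.mulVec, dotProduct, Fin.sum_univ_three]
  · rw [hM, Matrix.charpoly, Matrix.det_fin_three]
    simp [Matrix.charmatrix_apply, Matrix.one_apply, div_eq_mul_inv, map_mul, map_neg]
    ring
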